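/- Let η be a substitution over A with growing letter b, and let u ∈ A^{ℤ<0} be a left-infinite periodic point of η with u_{-1} = b and period p ≥ 1. For every integer n ≤ −2, there exist a unique integer k divisible by p and a unique b-admissible sequence (m_i, a_i)_{i=0,…,k-1} such that η^{p-1}(m_{k-1}) η^{p-2}(m_{k-2}) ⋯ η^0(m_{k-p}) a_{k-p} ≠ η^p(b) and u_{−|η^k(b)|} ⋯ u_{n-2} u_{n-1} = η^{k-1}(m_{k-1}) η^{k-2}(m_{k-2}) ⋯ η^0(m_0). -/

import Mathlib

open Filter List

variable {A : Type*}

/-- A substitution applied to a word: concatenation of the images of its letters. -/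
def substW (η : A → List A) (w : List A) : List A := (w.map η).flatten

/-- The `k`-th iterate of a substitution applied to a word. -/
def iterW (η : A → List A) (k : ℕ) (w : List A) : List A := (substW η)^[k] w

/-- `η` is a substitution: nonempty images and at least one growing letter. -/
def IsSubstitution (η : A → List A) : Prop :=
  (∀ c, η c ≠ []) ∧ ∃ a, Tendsto (fun k => (iterW η k [a]).length) atTop atTop

/-- `(m i, a i)` for `i = 0, …, len-1` is an `x`-admissible sequence:
`m (i) ++ [a i]` is a prefix of `η (a (i+1))` and `m (len-1) ++ [a (len-1)]`
is a prefix of `η x`. -/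
def AdmSeq (η : A → List A) (len : ℕ) (m : ℕ → List A) (a : ℕ → A) (x : A) : Prop :=
  (∀ i, i + 1 < len → (m i ++ [a i]) <+: η (a (i + 1))) ∧
  (1 ≤ len → (m (len - 1) ++ [a (len - 1)]) <+: η x)

/-- `Σ_{j<k} |η^j(m_j)|`. -/
def sumLen (η : A → List A) (k : ℕ) (m : ℕ → List A) : ℕ :=
  ∑ j ∈ Finset.range k, (iterW η j (m j)).length

/-- `η^{k-1}(m_{k-1}) η^{k-2}(m_{k-2}) ⋯ η^0(m_0)`. -/
def concatDT (η : A → List A) (k : ℕ) (m : ℕ → List A) : List A :=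
  ((List.range k).reverse.map (fun j => iterW η j (m j))).flatten

/-- The digit word `|m_{k-1}| ⊙ |m_{k-2}| ⊙ ⋯ ⊙ |m_0|`. -/
def dtDigits (k : ℕ) (m : ℕ → List A) : List ℕ :=
  (List.range k).reverse.map (fun j => (m j).length)

/-- Partial run of the automaton `A_{η,x}`: from state `x`, the digit `d`
moves to the `d`-th letter of `η x` when `d < |η x|`. -/
def run (η : A → List A) : List ℕ → A → Option A
  | [], x => some x
  | d :: w, x => if h : d < (η x).length then run η w ((η x)[d]) else none

/-- `u` restricted to nonnegative positions is a periodic point of `η` of period `p`: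
every `η^p`-image of a prefix of `u` is again a prefix of `u`. -/
def RightPer (η : A → List A) (p : ℕ) (u : ℤ → A) : Prop :=
  ∀ n : ℕ, ∀ j : ℕ, j < (iterW η p (List.ofFn (fun i : Fin (n+1) => u i))).length →
    (iterW η p (List.ofFn (fun i : Fin (n+1) => u i)))[j]? = some (u j)

/-- `u` restricted to negative positions is a periodic point of `η` of period `p`:
every `η^p`-image of a suffix `u_{-(n+1)} ⋯ u_{-1}` of the left part is again a
suffix of the left part of `u`. -/
def LeftPer (η : A → List A) (p : ℕ) (u : ℤ → A) : Prop :=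
  ∀ n : ℕ, ∀ j : ℕ,
    j < (iterW η p (List.ofFn (fun i : Fin (n+1) => u ((i : ℤ) - (n+1))))).length →
    (iterW η p (List.ofFn (fun i : Fin (n+1) => u ((i : ℤ) - (n+1)))))[j]? =
      some (u ((j : ℤ) -
        (iterW η p (List.ofFn (fun i : Fin (n+1) => u ((i : ℤ) - (n+1))))).length))

/-- `u : ℤ → A` is a two-sided periodic point of `η` of period `p ≥ 1` with
growing seed `u₋₁ | u₀`. -/
def TwoSidedPerPoint (η : A → List A) (p : ℕ) (u : ℤ → A) : Prop :=
  1 ≤ p ∧ RightPer η p u ∧ LeftPer η p u ∧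
  Tendsto (fun k => (iterW η k [u 0]).length) atTop atTop ∧
  Tendsto (fun k => (iterW η k [u (-1)]).length) atTop atTop

/-- The Dumont–Thomas decomposition data of a positive integer `n` with respect to
the letter `x` (Theorem of Dumont–Thomas for the right-infinite part):
`p ∣ k`, `p ≤ k`, the sequence is `x`-admissible, `m_{k-1} ⋯ m_{k-p} ≠ ε` and
`Σ_{j<k} |η^j(m_j)| = n`. -/
def PosSpec (η : A → List A) (p : ℕ) (x : A) (n : ℤ) (k : ℕ) (m : ℕ → List A)
    (a : ℕ → A) : Prop :=
  p ∣ k ∧ p ≤ k ∧ AdmSeq η k m a x ∧ (∃ i, i < p ∧ m (k - 1 - i) ≠ []) ∧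
  (sumLen η k m : ℤ) = n

/-- The Dumont–Thomas decomposition data of an integer `n ≤ -2` with respect to
the letter `b` (Theorem of Dumont–Thomas for the left-infinite part). -/
def NegSpec (η : A → List A) (p : ℕ) (b : A) (n : ℤ) (k : ℕ) (m : ℕ → List A)
    (a : ℕ → A) : Prop :=
  p ∣ k ∧ p ≤ k ∧ AdmSeq η k m a b ∧
  ((List.range p).map (fun i => iterW η (p - 1 - i) (m (k - 1 - i)))).flatten
      ++ [a (k - p)] ≠ iterW η p [b] ∧
  (sumLen η k m : ℤ) = n + (iterW η k [b]).length

/-- `w` is the Dumont–Thomas complement representation `rep_u(n)` of `n ∈ ℤ`. -/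
def RepSpec (η : A → List A) (p : ℕ) (u : ℤ → A) (n : ℤ) (w : List ℕ) : Prop :=
  (n = 0 ∧ w = [0]) ∨ (n = -1 ∧ w = [1]) ∨
  (1 ≤ n ∧ ∃ k m a, PosSpec η p (u 0) n k m a ∧ w = 0 :: dtDigits k m) ∨
  (n ≤ -2 ∧ ∃ k m a, NegSpec η p (u (-1)) n k m a ∧ w = 1 :: dtDigits k m)

/-- Run of the automaton `A_{η,s}` with initial state `start`: the first digit
`0` (resp. `1`) moves to `u 0` (resp. `u (-1)`). -/
def runSeed (η : A → List A) (u : ℤ → A) : List ℕ → Option A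
  | [] => none
  | d :: w => if d = 0 then run η w (u 0) else if d = 1 then run η w (u (-1)) else none

/-- `|η^{k-p-1}(m_{k-1}) ⋯ η^0(m_p)|`, the `u`-quotient of a positive integer. -/
def uQuotPos (η : A → List A) (p k : ℕ) (m : ℕ → List A) : ℤ :=
  ∑ j ∈ Finset.range (k - p), ((iterW η j (m (j + p))).length : ℤ)

/-- `w = tail_{η,p,x}(n)`: the digit word of the unique `x`-admissible sequence of
length `p` whose length-sum is `n`. -/
def TailSpec (η : A → List A) (p : ℕ) (x : A) (n : ℕ) (w : List ℕ) : Prop :=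
  ∃ m a, AdmSeq η p m a x ∧ sumLen η p m = n ∧ w = dtDigits p m

/-- Radix order: shorter words first, ties broken lexicographically. -/
def radLt (v w : List ℕ) : Prop :=
  v.length < w.length ∨ (v.length = w.length ∧ List.Lex (· < ·) v w)

/-- Reversed-radix order: longer words first, ties broken lexicographically. -/
def revLt (v w : List ℕ) : Prop :=
  w.length < v.length ∨ (v.length = w.length ∧ List.Lex (· < ·) v w)

/-- The total order `≺` on `{0,1}D*`. -/
def precLt (v w : List ℕ) : Prop :=
  (v.head? = some 1 ∧ w.head? = some 0) ∨
  (v.head? = some 0 ∧ w.head? = some 0 ∧ radLt v w) ∨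
  (v.head? = some 1 ∧ w.head? = some 1 ∧ revLt v w)

/-- The base-2 value `Σ_{i<k} w_i 2^i` of the word `w = w_{k-1} ⋯ w_0`. -/
def natVal2 (w : List ℕ) : ℕ := w.foldl (fun acc d => 2 * acc + d) 0

/-- The two's complement value `Σ_{i<k} w_i 2^i − w_{k-1} 2^k`. -/
def val2c (w : List ℕ) : ℤ := (natVal2 w : ℤ) - (w.headI : ℤ) * 2 ^ w.length

/-- Fibonacci numbers with `F 0 = 1`, `F 1 = 2`. -/
def fib2 : ℕ → ℕ
  | 0 => 1
  | 1 => 2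
  | n + 2 => fib2 (n + 1) + fib2 n

/-- The Fibonacci complement value `Σ_{i<k} w_i F_i − w_{k-1} F_k`
of the word `w = w_{k-1} ⋯ w_0`. -/
def valFc (w : List ℕ) : ℤ :=
  (∑ i ∈ Finset.range w.length, (w.reverse.getD i 0 : ℤ) * fib2 i) -
    (w.headI : ℤ) * fib2 w.length

section DTHelpers

variable (η : A → List A)

theorem substW_append (v w : List A) : substW η (v ++ w) = substW η v ++ substW η w := by
  simp [substW]

theorem substW_singleton (c : A) : substW η [c] = η c := by simp [substW]

theorem iterW_succ' (k : ℕ) (w : List A) : iterW η (k+1) w = iterW η k (substW η w) :=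
  Function.iterate_succ_apply _ _ _

theorem iterW_succ (k : ℕ) (w : List A) : iterW η (k+1) w = substW η (iterW η k w) :=
  Function.iterate_succ_apply' _ _ _

theorem iterW_zero (w : List A) : iterW η 0 w = w := rfl

theorem iterW_append (k : ℕ) (v w : List A) :
    iterW η k (v ++ w) = iterW η k v ++ iterW η k w := by
  induction k generalizing v w with
  | zero => rfl
  | succ k ih => rw [iterW_succ', substW_append, ih, iterW_succ', iterW_succ']

theorem iterW_add (a b : ℕ) (w : List A) :
    iterW η a (iterW η b w) = iterW η (a + b) w :=
  (Function.iterate_add_apply _ _ _ _).symm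

theorem iterW_nil (k : ℕ) : iterW η k ([] : List A) = [] := by
  induction k with
  | zero => rfl
  | succ k ih => rw [iterW_succ', show substW η [] = [] from rfl, ih]

theorem iterW_flatten (k : ℕ) (L : List (List A)) :
    iterW η k L.flatten = (L.map (iterW η k)).flatten := by
  induction L with
  | nil => simp [iterW_nil]
  | cons v L ih => simp [iterW_append, ih]

theorem IsPrefix.iterW {v w : List A} (h : v <+: w) (k : ℕ) :
    iterW η k v <+: iterW η k w := by
  obtain ⟨t, rfl⟩ := h
  rw [iterW_append]
  exact List.prefix_append _ _

theorem length_le_substW (h1 : ∀ c, η c ≠ []) (v : List A) :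
    v.length ≤ (substW η v).length := by
  induction v with
  | nil => simp [substW]
  | cons c v ih =>
    have : substW η (c :: v) = η c ++ substW η v := by simp [substW]
    rw [this, List.length_append, List.length_cons]
    have hc : 1 ≤ (η c).length := List.length_pos_iff.mpr (h1 c)
    omega

theorem iterW_length_mono (h1 : ∀ c, η c ≠ []) (w : List A) :
    Monotone fun k => (iterW η k w).length := by
  apply monotone_nat_of_le_succ
  intro k
  rw [iterW_succ]
  exact length_le_substW η h1 _

theorem one_le_iterW_length (h1 : ∀ c, η c ≠ []) (k : ℕ) (c : A) :
    1 ≤ (iterW η k [c]).length := by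
  have := iterW_length_mono η h1 [c] (Nat.zero_le k)
  simpa [iterW_zero] using this

theorem concatDT_zero (m : ℕ → List A) : concatDT η 0 m = [] := rfl

theorem concatDT_one (m : ℕ → List A) : concatDT η 1 m = m 0 := by
  simp [concatDT, List.range_succ, iterW_zero]

theorem concatDT_succ (k : ℕ) (m : ℕ → List A) :
    concatDT η (k+1) m = iterW η k (m k) ++ concatDT η k m := by
  simp [concatDT, List.range_succ]

theorem concatDT_congr (k : ℕ) (m m' : ℕ → List A) (h : ∀ j < k, m j = m' j) :
    concatDT η k m = concatDT η k m' := by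
  unfold concatDT
  congr 1
  apply List.map_congr_left
  intro j hj
  rw [List.mem_reverse, List.mem_range] at hj
  rw [h j hj]

theorem admSeq_trunc {k : ℕ} {m : ℕ → List A} {a : ℕ → A} {x : A}
    (h : AdmSeq η k m a x) {j : ℕ} (hj : j < k) : AdmSeq η j m a (a j) := by
  constructor
  · intro i hi
    exact h.1 i (by omega)
  · intro hj1
    have := h.1 (j - 1) (by omega)
    rwa [Nat.sub_add_cancel hj1] at this

theorem admSeq_shift {k p : ℕ} {m : ℕ → List A} {a : ℕ → A} {x : A}
    (h : AdmSeq η k m a x) (hpk : p ≤ k) :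
    AdmSeq η p (fun j => m (j + (k - p))) (fun j => a (j + (k - p))) x := by
  constructor
  · intro i hi
    show m (i + (k - p)) ++ [a (i + (k - p))] <+: η (a (i + 1 + (k - p)))
    have := h.1 (i + (k - p)) (by omega)
    have he : i + 1 + (k - p) = i + (k - p) + 1 := by omega
    rw [he]
    exact this
  · intro hp1
    show m (p - 1 + (k - p)) ++ [a (p - 1 + (k - p))] <+: η x
    have := h.2 (by omega)
    have he : p - 1 + (k - p) = k - 1 := by omega
    rw [he]
    exact this

theorem concatDT_prefix {k : ℕ} (hk : 1 ≤ k) {m : ℕ → List A} {a : ℕ → A} {x : A}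
    (h : AdmSeq η k m a x) : concatDT η k m ++ [a 0] <+: iterW η k [x] := by
  induction k, hk using Nat.le_induction generalizing x with
  | base =>
    have h2 := h.2 le_rfl
    simp only [Nat.sub_self] at h2
    rw [concatDT_one]
    rw [show iterW η 1 [x] = η x by rw [iterW_succ', substW_singleton, iterW_zero]]
    exact h2
  | succ k hk ih =>
    have htr : AdmSeq η k m a (a k) := admSeq_trunc η h (Nat.lt_succ_self k)
    have hbot := ih htr
    have htop : m k ++ [a k] <+: η x := by
      have := h.2 (by omega)
      simpa using this
    have h1 : iterW η k (m k ++ [a k]) <+: iterW η (k+1) [x] := by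
      rw [show iterW η (k+1) [x] = iterW η k (η x) by
        rw [iterW_succ', substW_singleton]]
      exact IsPrefix.iterW η htop k
    rw [iterW_append] at h1
    calc concatDT η (k+1) m ++ [a 0]
        = iterW η k (m k) ++ (concatDT η k m ++ [a 0]) := by
          rw [concatDT_succ, List.append_assoc]
      _ <+: iterW η k (m k) ++ iterW η k [a k] := by
          obtain ⟨t, ht⟩ := hbot
          exact ⟨t, by rw [List.append_assoc, ht]⟩
      _ <+: iterW η (k+1) [x] := h1

theorem reverse_map_range {B : Type*} (p : ℕ) (f : ℕ → B) :
    ((List.range p).map f).reverse = (List.range p).map (fun i => f (p - 1 - i)) := by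
  rw [← List.map_reverse, List.range_eq_range', List.reverse_range', List.map_map,
    ← List.range_eq_range']
  apply List.map_congr_left
  intro i hi
  simp only [Function.comp_apply]
  congr 1
  omega

theorem concatDT_eq_rev (k : ℕ) (m : ℕ → List A) :
    concatDT η k m
      = ((List.range k).map (fun i => iterW η (k - 1 - i) (m (k - 1 - i)))).flatten := by
  rw [concatDT, List.map_reverse, reverse_map_range]

theorem flat_eq_concatDT {p k : ℕ} (hpk : p ≤ k) (m : ℕ → List A) :
    ((List.range p).map (fun i => iterW η (p - 1 - i) (m (k - 1 - i)))).flatten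
      = concatDT η p (fun j => m (j + (k - p))) := by
  rw [concatDT_eq_rev]
  congr 1
  apply List.map_congr_left
  intro i hi
  rw [List.mem_range] at hi
  show iterW η (p - 1 - i) (m (k - 1 - i))
      = iterW η (p - 1 - i) (m (p - 1 - i + (k - p)))
  rw [show p - 1 - i + (k - p) = k - 1 - i from by omega]

theorem concatDT_split {p k : ℕ} (hpk : p ≤ k) (m : ℕ → List A) :
    concatDT η k m =
      iterW η (k - p) (concatDT η p (fun j => m (j + (k - p)))) ++ concatDT η (k - p) m := by
  conv_lhs => rw [show k = (k - p) + p from by omega]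
  simp only [concatDT]
  rw [List.range_add, List.reverse_append, List.map_append, List.flatten_append]
  congr 1
  rw [iterW_flatten, List.map_map, ← List.map_reverse, List.map_map]
  congr 1
  apply List.map_congr_left
  intro j hj
  simp only [Function.comp_apply]
  rw [iterW_add, Nat.add_comm (k - p) j]

theorem locate (k : ℕ) : ∀ (w : List A) (L : ℕ), L < (iterW η k w).length →
    ∃ q r c, w[q]? = some c ∧ r < (iterW η k [c]).length ∧
      L = (iterW η k (w.take q)).length + r := by
  intro w
  induction w with
  | nil => intro L hL; rw [iterW_nil] at hL; simp at hL
  | cons d w ih =>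
    intro L hL
    have hsplit : iterW η k (d :: w) = iterW η k [d] ++ iterW η k w := by
      rw [show d :: w = [d] ++ w from rfl, iterW_append]
    rw [hsplit, List.length_append] at hL
    by_cases hc : L < (iterW η k [d]).length
    · exact ⟨0, L, d, by simp, hc, by simp [iterW_nil]⟩
    · push_neg at hc
      obtain ⟨q, r, c, h1, h2, h3⟩ := ih (L - (iterW η k [d]).length) (by omega)
      refine ⟨q + 1, r, c, by simpa using h1, h2, ?_⟩
      rw [List.take_succ_cons, show d :: w.take q = [d] ++ w.take q from rfl,
        iterW_append, List.length_append]
      omega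

theorem exists_dec (k : ℕ) (hk : 1 ≤ k) :
    ∀ (x : A) (L : ℕ), L < (iterW η k [x]).length →
    ∃ m a, AdmSeq η k m a x ∧ (concatDT η k m).length = L := by
  induction k, hk using Nat.le_induction with
  | base =>
    intro x L hL
    rw [show iterW η 1 [x] = η x from by rw [iterW_succ', substW_singleton, iterW_zero]] at hL
    refine ⟨fun _ => (η x).take L, fun _ => (η x).getD L x, ⟨?_, ?_⟩, ?_⟩
    · intro i hi; omega
    · intro _
      simp only [Nat.sub_self]
      have heq : (η x).take L ++ [(η x).getD L x] = (η x).take (L + 1) := by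
        rw [List.getD_eq_getElem _ _ hL, List.take_succ, List.getElem?_eq_getElem hL]
        rfl
      rw [heq]
      exact List.take_prefix _ _
    · rw [concatDT_one, List.length_take]; omega
  | succ k hk ih =>
    intro x L hL
    rw [iterW_succ', substW_singleton] at hL
    obtain ⟨q, r, c, hq, hr, hLr⟩ := locate η k (η x) L hL
    obtain ⟨m', a', hadm', hlen'⟩ := ih c r hr
    have hqlt : q < (η x).length := by
      by_contra hcon
      rw [List.getElem?_eq_none (by omega)] at hq
      simp at hq
    refine ⟨Function.update m' k ((η x).take q), Function.update a' k c, ⟨?_, ?_⟩, ?_⟩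
    · intro i hi
      have hik : i ≠ k := by omega
      rw [Function.update_of_ne hik, Function.update_of_ne hik]
      by_cases h1 : i + 1 = k
      · rw [h1, Function.update_self]
        have := hadm'.2 hk
        rw [show k - 1 = i from by omega] at this
        exact this
      · rw [Function.update_of_ne h1]
        exact hadm'.1 i (by omega)
    · intro _
      rw [show k + 1 - 1 = k from rfl, Function.update_self, Function.update_self]
      have heq : (η x).take q ++ [c] = (η x).take (q + 1) := by
        rw [List.take_succ, hq]
        rfl
      rw [heq]
      exact List.take_prefix _ _
    · rw [concatDT_succ, List.length_append, Function.update_self,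
        concatDT_congr η k _ m' (fun j hj => Function.update_of_ne (Nat.ne_of_lt hj) _ _),
        hlen']
      omega

theorem prefix_eq_of_length {B : Type*} {v v' w : List B} (hv : v <+: w) (hv' : v' <+: w)
    (h : v.length = v'.length) : v = v' :=
  (List.prefix_of_prefix_length_le hv hv' h.le).eq_of_length h

theorem unique_dec (k : ℕ) (hk : 1 ≤ k) :
    ∀ (x : A) (m : ℕ → List A) (a : ℕ → A) (m' : ℕ → List A) (a' : ℕ → A),
      AdmSeq η k m a x → AdmSeq η k m' a' x →
      (concatDT η k m).length = (concatDT η k m').length →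
      ∀ i < k, m i = m' i ∧ a i = a' i := by
  induction k, hk using Nat.le_induction with
  | base =>
    intro x m a m' a' h h' hlen i hi
    have h2 := h.2 le_rfl
    have h2' := h'.2 le_rfl
    simp only [Nat.sub_self] at h2 h2'
    rw [concatDT_one, concatDT_one] at hlen
    have heq : m 0 ++ [a 0] = m' 0 ++ [a' 0] :=
      prefix_eq_of_length h2 h2' (by simp [hlen])
    obtain ⟨hm, ha⟩ := List.append_inj' heq rfl
    have : i = 0 := by omega
    subst this
    exact ⟨hm, by simpa using ha⟩
  | succ k hk ih =>
    intro x m a m' a' h h' hlen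
    have htr : AdmSeq η k m a (a k) := admSeq_trunc η h (by omega)
    have htr' : AdmSeq η k m' a' (a' k) := admSeq_trunc η h' (by omega)
    have h2 := h.2 (by omega)
    have h2' := h'.2 (by omega)
    simp only [Nat.add_sub_cancel] at h2 h2'
    have hblen : (concatDT η k m).length + 1 ≤ (iterW η k [a k]).length := by
      have := (concatDT_prefix η hk htr).length_le
      rw [List.length_append] at this
      simpa using this
    have hblen' : (concatDT η k m').length + 1 ≤ (iterW η k [a' k]).length := by
      have := (concatDT_prefix η hk htr').length_le
      rw [List.length_append] at this
      simpa using this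
    rw [concatDT_succ, concatDT_succ, List.length_append, List.length_append] at hlen
    have hmk : (m k).length = (m' k).length := by
      by_contra hne
      rcases Nat.lt_or_ge (m k).length (m' k).length with hlt | hge
      · have hpre : m k ++ [a k] <+: m' k :=
          List.prefix_of_prefix_length_le h2 ((List.prefix_append _ _).trans h2')
            (by rw [List.length_append]; simpa using hlt)
        have hl := (IsPrefix.iterW η hpre k).length_le
        rw [iterW_append, List.length_append] at hl
        omega
      · have hlt : (m' k).length < (m k).length := by omega
        have hpre : m' k ++ [a' k] <+: m k :=
          List.prefix_of_prefix_length_le h2' ((List.prefix_append _ _).trans h2)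
            (by rw [List.length_append]; simpa using hlt)
        have hl := (IsPrefix.iterW η hpre k).length_le
        rw [iterW_append, List.length_append] at hl
        omega
    have hmk_eq : m k = m' k :=
      prefix_eq_of_length ((List.prefix_append _ _).trans h2)
        ((List.prefix_append _ _).trans h2') hmk
    have hak : a k = a' k := by
      have heq : m k ++ [a k] = m' k ++ [a' k] :=
        prefix_eq_of_length h2 h2' (by simp [hmk])
      have := (List.append_inj' heq rfl).2
      simpa using this
    have hcm : (concatDT η k m).length = (concatDT η k m').length := by
      have : (iterW η k (m k)).length = (iterW η k (m' k)).length := by rw [hmk_eq]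
      omega
    intro i hi
    by_cases hik : i = k
    · subst hik; exact ⟨hmk_eq, hak⟩
    · exact ih (a k) m a m' a' htr (by rw [hak]; exact htr') hcm i (by omega)

theorem suffix_u (h1 : ∀ c, η c ≠ []) {p : ℕ} {u : ℤ → A} (hper : LeftPer η p u) :
    ∀ t : ℕ, ∀ j : ℕ, j < (iterW η (t * p) [u (-1)]).length →
      (iterW η (t * p) [u (-1)])[j]? =
        some (u ((j : ℤ) - (iterW η (t * p) [u (-1)]).length)) := by
  intro t
  induction t with
  | zero =>
    intro j hj
    rw [Nat.zero_mul, iterW_zero] at hj ⊢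
    have : j = 0 := by simpa using hj
    subst this
    norm_num
  | succ t ih =>
    intro j hj
    have hlen : 1 ≤ (iterW η (t * p) [u (-1)]).length := one_le_iterW_length η h1 _ _
    have hofn : List.ofFn
        (fun i : Fin (((iterW η (t * p) [u (-1)]).length - 1) + 1) =>
          u ((i : ℤ) - (((iterW η (t * p) [u (-1)]).length - 1 : ℕ) + 1))) =
        iterW η (t * p) [u (-1)] := by
      apply List.ext_getElem
      · simp; omega
      · intro i hi1 hi2
        rw [List.getElem_ofFn]
        have hv := ih i hi2
        rw [List.getElem?_eq_getElem hi2] at hv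
        rw [Option.some.inj hv]
        congr 1
        show (i : ℤ) - ((((iterW η (t * p) [u (-1)]).length - 1 : ℕ) : ℤ) + 1)
            = (i : ℤ) - ((iterW η (t * p) [u (-1)]).length : ℤ)
        omega
    have key := hper ((iterW η (t * p) [u (-1)]).length - 1)
    rw [hofn] at key
    have hiter : iterW η p (iterW η (t * p) [u (-1)]) = iterW η ((t + 1) * p) [u (-1)] := by
      rw [iterW_add]
      congr 1
      ring
    rw [hiter] at key
    exact key j hj

theorem iterW_last (h1 : ∀ c, η c ≠ []) {p : ℕ} {u : ℤ → A} (hper : LeftPer η p u)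
    (t : ℕ) :
    iterW η (t * p) [u (-1)] = (iterW η (t * p) [u (-1)]).dropLast ++ [u (-1)] := by
  have hlen : 1 ≤ (iterW η (t * p) [u (-1)]).length := one_le_iterW_length η h1 _ _
  have hne : iterW η (t * p) [u (-1)] ≠ [] := List.ne_nil_of_length_pos hlen
  have hlast := suffix_u η h1 hper t ((iterW η (t * p) [u (-1)]).length - 1) (by omega)
  rw [List.getElem?_eq_getElem (by omega)] at hlast
  have hgl : (iterW η (t * p) [u (-1)]).getLast hne = u (-1) := by
    rw [List.getLast_eq_getElem, Option.some.inj hlast]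
    congr 1
    omega
  conv_lhs => rw [← List.dropLast_append_getLast hne]
  rw [hgl]

end DTHelpers

/-- Dumont–Thomas theorem for left-infinite periodic points.
If the left part of `u` is a periodic point of `η` of period `p` with growing
seed `b = u (-1)`, then every `n ≤ -2` admits a unique `k` divisible by `p` and
a unique `b`-admissible sequence `(m_i,a_i)_{i=0,…,k-1}` with
`η^{p-1}(m_{k-1}) ⋯ η^0(m_{k-p}) a_{k-p} ≠ η^p(b)` and
`u_{−|η^k(b)|} ⋯ u_{n-1} = η^{k-1}(m_{k-1}) ⋯ η^0(m_0)`. -/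
theorem dumont_thomas_left [Finite A] (η : A → List A) (hη : IsSubstitution η)
    (p : ℕ) (hp : 1 ≤ p) (u : ℤ → A)
    (hgrow : Tendsto (fun k => (iterW η k [u (-1)]).length) atTop atTop)
    (hper : LeftPer η p u)
    (n : ℤ) (hn : n ≤ -2) :
    ∃ (k : ℕ) (m : ℕ → List A) (a : ℕ → A),
      (p ∣ k ∧ p ≤ k ∧ AdmSeq η k m a (u (-1)) ∧
        ((List.range p).map (fun i => iterW η (p - 1 - i) (m (k - 1 - i)))).flatten
            ++ [a (k - p)] ≠ iterW η p [u (-1)] ∧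
        ((concatDT η k m).length : ℤ) = (iterW η k [u (-1)]).length + n ∧
        (∀ j : ℕ, j < (concatDT η k m).length →
          (concatDT η k m)[j]? =
            some (u ((j : ℤ) - (iterW η k [u (-1)]).length)))) ∧
      ∀ (k' : ℕ) (m' : ℕ → List A) (a' : ℕ → A),
        (p ∣ k' ∧ p ≤ k' ∧ AdmSeq η k' m' a' (u (-1)) ∧
          ((List.range p).map (fun i => iterW η (p - 1 - i) (m' (k' - 1 - i)))).flatten
              ++ [a' (k' - p)] ≠ iterW η p [u (-1)] ∧
          ((concatDT η k' m').length : ℤ) = (iterW η k' [u (-1)]).length + n ∧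
          (∀ j : ℕ, j < (concatDT η k' m').length →
            (concatDT η k' m')[j]? =
              some (u ((j : ℤ) - (iterW η k' [u (-1)]).length)))) →
        k = k' ∧ ∀ i < k, m i = m' i ∧ a i = a' i := by
  classical
  obtain ⟨h1, -⟩ := hη
  have hN2 : 2 ≤ (-n).toNat := by omega
  set N := (-n).toNat with hN
  have hNn : (N : ℤ) = -n := by omega
  have hmono := iterW_length_mono η h1 [u (-1)]
  have hex : ∃ t : ℕ, N ≤ (iterW η (t * p) [u (-1)]).length := by
    obtain ⟨K, hK⟩ := (hgrow.eventually_ge_atTop N).exists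
    exact ⟨K, le_trans hK (hmono (Nat.le_mul_of_pos_right K hp))⟩
  set t := Nat.find hex with ht
  have htP : N ≤ (iterW η (t * p) [u (-1)]).length := Nat.find_spec hex
  have htmin : ∀ s, s < t → (iterW η (s * p) [u (-1)]).length < N := by
    intro s hs
    have := Nat.find_min hex hs
    omega
  have ht1 : 1 ≤ t := by
    by_contra h0
    have ht0 : t = 0 := by omega
    rw [ht0, Nat.zero_mul, iterW_zero] at htP
    simp at htP
    omega
  have hpk : p ≤ t * p := by
    calc p = 1 * p := (one_mul p).symm
    _ ≤ t * p := Nat.mul_le_mul_right p ht1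
  have hk1 : 1 ≤ t * p := le_trans hp hpk
  have hL : (iterW η (t * p) [u (-1)]).length - N < (iterW η (t * p) [u (-1)]).length := by
    omega
  obtain ⟨m, a, hadm, hclen⟩ :=
    exists_dec η (t * p) hk1 (u (-1)) ((iterW η (t * p) [u (-1)]).length - N) hL
  have hsuf := suffix_u η h1 hper t
  have hWp : iterW η p [u (-1)] = (iterW η p [u (-1)]).dropLast ++ [u (-1)] := by
    have := iterW_last η h1 hper 1
    rwa [one_mul] at this
  have hWlen : ∀ k₀, p ≤ k₀ →
      (iterW η (k₀ - p) ((iterW η p [u (-1)]).dropLast)).length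
        + (iterW η (k₀ - p) [u (-1)]).length = (iterW η k₀ [u (-1)]).length := by
    intro k₀ h₀
    have heq : iterW η (k₀ - p) ((iterW η p [u (-1)]).dropLast) ++ iterW η (k₀ - p) [u (-1)]
        = iterW η k₀ [u (-1)] := by
      rw [← iterW_append, ← hWp, iterW_add, Nat.sub_add_cancel h₀]
    have := congrArg List.length heq
    rwa [List.length_append] at this
  -- the "there are at least p levels below the top-p block" bound, shared shape:
  have hbound : ∀ (k' : ℕ) (m' : ℕ → List A) (a' : ℕ → A), p ≤ k' →
      AdmSeq η k' m' a' (u (-1)) →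
      ((List.range p).map (fun i => iterW η (p - 1 - i) (m' (k' - 1 - i)))).flatten
          ++ [a' (k' - p)] ≠ iterW η p [u (-1)] →
      (concatDT η k' m').length
        + (iterW η (k' - p) [u (-1)]).length + 1 ≤ (iterW η k' [u (-1)]).length := by
    intro k' m' a' hpk' hadm' hne'
    rw [flat_eq_concatDT η hpk' m'] at hne'
    have hsh := admSeq_shift η hadm' hpk'
    have hflat := concatDT_prefix η hp hsh
    simp only [Nat.zero_add] at hflat
    -- hflat : concatDT η p m'' ++ [a' (0 + (k' - p))] <+: iterW η p [u (-1)]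
    have hflat2 : concatDT η p (fun j => m' (j + (k' - p))) ++ [a' (k' - p)]
        <+: iterW η p [u (-1)] := hflat
    have hne2 : concatDT η p (fun j => m' (j + (k' - p))) ++ [a' (k' - p)]
        ≠ iterW η p [u (-1)] := hne'
    have hWplen : (iterW η p [u (-1)]).length
        = (iterW η p [u (-1)]).dropLast.length + 1 := by
      conv_lhs => rw [hWp]
      rw [List.length_append]
      rfl
    have hltW : (concatDT η p (fun j => m' (j + (k' - p)))).length + 1
        ≤ (iterW η p [u (-1)]).dropLast.length := by
      have hle := hflat2.length_le
      have hlt : (concatDT η p (fun j => m' (j + (k' - p))) ++ [a' (k' - p)]).length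
          < (iterW η p [u (-1)]).length :=
        lt_of_le_of_ne hle (fun hcon => hne2 (hflat2.eq_of_length hcon))
      rw [List.length_append] at hlt
      simp only [List.length_singleton] at hlt
      omega
    have hprefW : concatDT η p (fun j => m' (j + (k' - p))) ++ [a' (k' - p)]
        <+: (iterW η p [u (-1)]).dropLast := by
      apply List.prefix_of_prefix_length_le hflat2
      · conv_rhs => rw [hWp]
        exact List.prefix_append _ _
      · rw [List.length_append]
        simp only [List.length_singleton]
        omega
    have himg := (IsPrefix.iterW η hprefW (k' - p)).length_le
    rw [iterW_append, List.length_append] at himg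
    have hbot : (concatDT η (k' - p) m').length + 1
        ≤ (iterW η (k' - p) [a' (k' - p)]).length := by
      by_cases hc : p = k'
      · subst hc
        rw [Nat.sub_self, concatDT_zero, iterW_zero]
        simp
      · have hk'p1 : 1 ≤ k' - p := by omega
        have htr' : AdmSeq η (k' - p) m' a' (a' (k' - p)) :=
          admSeq_trunc η hadm' (by omega)
        have := (concatDT_prefix η hk'p1 htr').length_le
        rw [List.length_append] at this
        simpa using this
    have hsplit' := congrArg List.length (concatDT_split η hpk' m')
    rw [List.length_append] at hsplit'
    have hWl' := hWlen k' hpk'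
    omega
  refine ⟨t * p, m, a, ⟨⟨t, Nat.mul_comm t p⟩, hpk, hadm, ?_, ?_, ?_⟩, ?_⟩
  · -- nonmaximality
    rw [flat_eq_concatDT η hpk m]
    intro heq
    rw [hWp] at heq
    have hW : concatDT η p (fun j => m (j + (t * p - p))) = (iterW η p [u (-1)]).dropLast :=
      (List.append_inj' heq rfl).1
    have hsplit := congrArg List.length (concatDT_split η hpk m)
    rw [List.length_append, hW] at hsplit
    have hsm : (iterW η (t * p - p) [u (-1)]).length < N := by
      have h2 := htmin (t - 1) (by omega)
      rw [show (t - 1) * p = t * p - p from by rw [Nat.sub_mul, one_mul]] at h2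
      exact h2
    have hWl := hWlen (t * p) hpk
    omega
  · rw [hclen]
    omega
  · intro j hj
    rw [hclen] at hj
    have hpre2 : concatDT η (t * p) m <+: iterW η (t * p) [u (-1)] :=
      (List.prefix_append _ _).trans (concatDT_prefix η hk1 hadm)
    obtain ⟨s, hs⟩ := hpre2
    have hval := hsuf j (by omega)
    rw [← hs, List.getElem?_append_left (by rw [hclen]; omega)] at hval
    rw [hs] at hval
    exact hval
  · -- uniqueness
    rintro k' m' a' ⟨hdvd', hpk', hadm', hne', hlen', -⟩
    obtain ⟨t', ht'⟩ := hdvd'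
    have hN' : N ≤ (iterW η k' [u (-1)]).length ∧
        (concatDT η k' m').length = (iterW η k' [u (-1)]).length - N := by
      constructor <;> omega
    have htt' : t ≤ t' := by
      apply Nat.find_le
      rw [show t' * p = k' from by rw [Nat.mul_comm, ← ht']]
      exact hN'.1
    have ht't : t' ≤ t := by
      by_contra hgt
      push_neg at hgt
      have hk'eq : (t' - 1) * p = k' - p := by
        rw [Nat.sub_mul, one_mul, Nat.mul_comm, ← ht']
      have hsm' : N ≤ (iterW η (k' - p) [u (-1)]).length := by
        have h₁ : t * p ≤ (t' - 1) * p := Nat.mul_le_mul_right p (by omega)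
        have h₂ := hmono h₁
        rw [hk'eq] at h₂
        exact le_trans htP h₂
      have hb := hbound k' m' a' hpk' hadm' hne'
      omega
    have hkk' : t * p = k' := by
      rw [ht', Nat.mul_comm]
      congr 1
      omega
    subst hkk'
    refine ⟨rfl, ?_⟩
    have hcm : (concatDT η (t * p) m).length = (concatDT η (t * p) m').length := by
      rw [hclen]
      omega
    exact unique_dec η (t * p) hk1 (u (-1)) m a m' a' hadm hadm' hcm
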